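/- Pareto stationarity rate (Theorem 3, explicit finite form): let E be a complete real inner product space, L_e : E → ℝ G-smooth and bounded below by m, and L_p : E → ℝ differentiable. Let iterates satisfy θ_{i+1} = θ_i − α d_i with d_i = ∇L_e(θ_i) + λ_i ∇L_p(θ_i), λ_i ≥ 0, 0 < α ≤ 1/G, and ⟨∇L_p(θ_i), d_i⟩ ≤ ε_i with λ_i ε_i ≥ 0 for i = 1, …, t. Then min_{1 ≤ i ≤ t} inf_{(μ_e, μ_p) ∈ Δ₂} ‖μ_e ∇L_e(θ_i) + μ_p ∇L_p(θ_i)‖² ≤ (1/t) [ (2/α)(L_e(θ_1) − m) + 2 Σ_{i=1}^{t} λ_i ε_i ]. -/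

import Mathlib

open RealInnerProductSpace

lemma descent_lemma
    {E : Type*} [NormedAddCommGroup E] [InnerProductSpace ℝ E] [CompleteSpace E]
    (f : E → ℝ) (g : E → E) (G : ℝ) (hG : 0 ≤ G)
    (hf : ∀ x : E, HasGradientAt f (g x) x)
    (hlip : ∀ x y : E, ‖g x - g y‖ ≤ G * ‖x - y‖) (x v : E) :
    f (x + v) ≤ f x + ⟪g x, v⟫ + G / 2 * ‖v‖ ^ 2 := by
  set φ : ℝ → ℝ := fun s => f (x + s • v) - s * ⟪g x, v⟫ - G / 2 * s ^ 2 * ‖v‖ ^ 2 with hφdef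
  have hφ : ∀ s : ℝ, HasDerivAt φ (⟪g (x + s • v), v⟫ - ⟪g x, v⟫ - G * s * ‖v‖ ^ 2) s := by
    intro s
    have h1 : HasDerivAt (fun s : ℝ => x + s • v) v s := by
      simpa using ((hasDerivAt_id s).smul_const v).const_add x
    have h2 := (hf (x + s • v)).hasFDerivAt.comp_hasDerivAt s h1
    have h3 : HasDerivAt (fun s : ℝ => s * ⟪g x, v⟫) ⟪g x, v⟫ s := by
      simpa using (hasDerivAt_id s).mul_const (⟪g x, v⟫ : ℝ)
    have h4 : HasDerivAt (fun s : ℝ => G / 2 * s ^ 2 * ‖v‖ ^ 2) (G * s * ‖v‖ ^ 2) s := by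
      have := ((hasDerivAt_pow 2 s).const_mul (G / 2)).mul_const (‖v‖ ^ 2)
      exact this.congr_deriv (by ring)
    have h5 := (h2.sub h3).sub h4
    exact h5
  have hanti : AntitoneOn φ (Set.Icc (0 : ℝ) 1) := by
    apply antitoneOn_of_deriv_nonpos (convex_Icc 0 1)
    · exact fun s _ => (hφ s).differentiableAt.continuousAt.continuousWithinAt
    · intro s hs
      exact ((hφ s).differentiableAt).differentiableWithinAt
    · intro s hs
      rw [interior_Icc] at hs
      rw [(hφ s).deriv]
      have hin : ⟪g (x + s • v) - g x, v⟫ ≤ ‖g (x + s • v) - g x‖ * ‖v‖ :=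
        real_inner_le_norm _ _
      have hl : ‖g (x + s • v) - g x‖ ≤ G * (s * ‖v‖) := by
        have := hlip (x + s • v) x
        simpa [norm_smul, abs_of_pos hs.1, mul_assoc] using this
      have hnn : (0:ℝ) ≤ ‖v‖ := norm_nonneg _
      have hrw : ⟪g (x + s • v) - g x, v⟫ = ⟪g (x + s • v), v⟫ - ⟪g x, v⟫ :=
        inner_sub_left _ _ _
      nlinarith [mul_le_mul_of_nonneg_right hl hnn]
  have h01 : φ 1 ≤ φ 0 := hanti (by norm_num) (by norm_num) (by norm_num)
  simp only [hφdef] at h01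
  norm_num at h01
  linarith

/-- Pareto stationarity rate: with L_e G-smooth and bounded below by m,
updates θ_{i+1} = θ_i − α d_i, d_i = ∇L_e(θ_i) + λ_i ∇L_p(θ_i), λ_i ≥ 0, 0 < α ≤ 1/G,
⟨∇L_p(θ_i), d_i⟩ ≤ ε_i, λ_i ε_i ≥ 0 for i = 1,…,t, the minimum over 1 ≤ i ≤ t of the
squared Pareto-stationarity gap inf_{Δ₂} ‖μ_e ∇L_e(θ_i) + μ_p ∇L_p(θ_i)‖² is at most
(1/t)[(2/α)(L_e(θ_1) − m) + 2 Σ λ_i ε_i]. -/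
theorem pareto_stationarity_rate
    {E : Type*} [NormedAddCommGroup E] [InnerProductSpace ℝ E] [CompleteSpace E]
    (Le Lp : E → ℝ) (gradLe gradLp : E → E) (G m : ℝ)
    (hgradLe : ∀ x : E, HasGradientAt Le (gradLe x) x)
    (hLipLe : ∀ x y : E, ‖gradLe x - gradLe y‖ ≤ G * ‖x - y‖)
    (hbelow : ∀ x : E, m ≤ Le x)
    (hgradLp : ∀ x : E, HasGradientAt Lp (gradLp x) x)
    (θ : ℕ → E) (d : ℕ → E) (lam ε : ℕ → ℝ) (α : ℝ) (t : ℕ) (ht : 1 ≤ t)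
    (hα0 : 0 < α) (hαG : α ≤ 1 / G)
    (hlam : ∀ i, 1 ≤ i → i ≤ t → 0 ≤ lam i)
    (hd : ∀ i, 1 ≤ i → i ≤ t → d i = gradLe (θ i) + lam i • gradLp (θ i))
    (hupdate : ∀ i, 1 ≤ i → i ≤ t → θ (i + 1) = θ i - α • d i)
    (hconstr : ∀ i, 1 ≤ i → i ≤ t → ⟪gradLp (θ i), d i⟫ ≤ ε i)
    (hle : ∀ i, 1 ≤ i → i ≤ t → 0 ≤ lam i * ε i) :
    (Finset.Icc 1 t).inf' (Finset.nonempty_Icc.mpr ht)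
        (fun i =>
          sInf {x : ℝ | ∃ μe μp : ℝ, 0 ≤ μe ∧ 0 ≤ μp ∧ μe + μp = 1 ∧
              x = ‖μe • gradLe (θ i) + μp • gradLp (θ i)‖ ^ 2}) ≤
      (1 / (t : ℝ)) *
        ((2 / α) * (Le (θ 1) - m) + 2 * ∑ i ∈ Finset.Icc 1 t, lam i * ε i) := by
  have hG : 0 < G := by
    by_contra h
    push_neg at h
    have : (1:ℝ) / G ≤ 0 := one_div_nonpos.mpr h
    linarith
  have hGα : G * α ≤ 1 := by
    rw [le_div_iff₀ hG] at hαG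
    linarith
  -- per-step descent
  have key : ∀ i, 1 ≤ i → i ≤ t →
      α / 2 * ‖d i‖ ^ 2 ≤ Le (θ i) - Le (θ (i + 1)) + α * (lam i * ε i) := by
    intro i h1 h2
    have hdesc := descent_lemma Le gradLe G hG.le hgradLe hLipLe (θ i) (-(α • d i))
    rw [hupdate i h1 h2]
    have heq : θ i + -(α • d i) = θ i - α • d i := by abel
    rw [heq] at hdesc
    have hin : ⟪gradLe (θ i), -(α • d i)⟫ = -(α * ⟪gradLe (θ i), d i⟫) := by
      rw [inner_neg_right, real_inner_smul_right]
    have hge : ⟪gradLe (θ i), d i⟫ = ‖d i‖ ^ 2 - lam i * ⟪gradLp (θ i), d i⟫ := by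
      have : gradLe (θ i) = d i - lam i • gradLp (θ i) := by
        rw [hd i h1 h2]; abel
      rw [this, inner_sub_left, real_inner_smul_left, real_inner_self_eq_norm_sq]
    have hcon := mul_le_mul_of_nonneg_left (hconstr i h1 h2) (hlam i h1 h2)
    have hnorm : ‖-(α • d i)‖ ^ 2 = α ^ 2 * ‖d i‖ ^ 2 := by
      rw [norm_neg, norm_smul, mul_pow, Real.norm_eq_abs, sq_abs]
    rw [hin, hge, hnorm] at hdesc
    have hdn : (0:ℝ) ≤ ‖d i‖ ^ 2 := sq_nonneg _
    nlinarith
  -- telescoping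
  have tele : ∀ n, n ≤ t → α / 2 * ∑ i ∈ Finset.Icc 1 n, ‖d i‖ ^ 2 ≤
      Le (θ 1) - Le (θ (n + 1)) + α * ∑ i ∈ Finset.Icc 1 n, lam i * ε i := by
    intro n hn
    induction n with
    | zero => simp
    | succ k ih =>
      have hk : k ≤ t := by omega
      have ihk := ih hk
      rw [Finset.sum_Icc_succ_top (by omega : 1 ≤ k + 1),
        Finset.sum_Icc_succ_top (by omega : 1 ≤ k + 1)]
      have := key (k + 1) (by omega) hn
      linarith
  have hsum : α / 2 * ∑ i ∈ Finset.Icc 1 t, ‖d i‖ ^ 2 ≤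
      Le (θ 1) - m + α * ∑ i ∈ Finset.Icc 1 t, lam i * ε i := by
    have := tele t le_rfl
    have := hbelow (θ (t + 1))
    linarith
  -- sInf bound
  set f : ℕ → ℝ := fun i =>
    sInf {x : ℝ | ∃ μe μp : ℝ, 0 ≤ μe ∧ 0 ≤ μp ∧ μe + μp = 1 ∧
        x = ‖μe • gradLe (θ i) + μp • gradLp (θ i)‖ ^ 2} with hfdef
  have hsinf : ∀ i, 1 ≤ i → i ≤ t → f i ≤ ‖d i‖ ^ 2 := by
    intro i h1 h2
    have hl := hlam i h1 h2
    have hpos : (0:ℝ) < 1 + lam i := by linarith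
    have hbdd : BddBelow {x : ℝ | ∃ μe μp : ℝ, 0 ≤ μe ∧ 0 ≤ μp ∧ μe + μp = 1 ∧
        x = ‖μe • gradLe (θ i) + μp • gradLp (θ i)‖ ^ 2} := by
      refine ⟨0, ?_⟩
      rintro x ⟨μe, μp, _, _, _, rfl⟩
      positivity
    have hmem : ‖(1 / (1 + lam i)) • d i‖ ^ 2 ∈
        {x : ℝ | ∃ μe μp : ℝ, 0 ≤ μe ∧ 0 ≤ μp ∧ μe + μp = 1 ∧
          x = ‖μe • gradLe (θ i) + μp • gradLp (θ i)‖ ^ 2} := by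
      refine ⟨1 / (1 + lam i), lam i / (1 + lam i), by positivity, by positivity, ?_, ?_⟩
      · field_simp
      · congr 1
        rw [hd i h1 h2, smul_add, smul_smul]
        congr 2
        rw [div_eq_mul_inv, div_eq_mul_inv]
        ring
    refine le_trans (csInf_le hbdd hmem) ?_
    rw [norm_smul, mul_pow, Real.norm_eq_abs, sq_abs]
    have h1le : (1 / (1 + lam i)) ^ 2 ≤ 1 := by
      rw [div_pow, one_pow, div_le_one (by positivity)]
      nlinarith
    nlinarith [sq_nonneg ‖d i‖]
  -- combine
  have htpos : (0:ℝ) < t := by exact_mod_cast ht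
  have hcard : ((Finset.Icc 1 t).card : ℝ) = t := by
    simp [Nat.card_Icc]
  set I := (Finset.Icc 1 t).inf' (Finset.nonempty_Icc.mpr ht) f with hIdef
  have hmin : (t:ℝ) * I ≤ ∑ i ∈ Finset.Icc 1 t, ‖d i‖ ^ 2 := by
    have h1 : ∀ i ∈ Finset.Icc 1 t, I ≤ ‖d i‖ ^ 2 := by
      intro i hi
      rw [Finset.mem_Icc] at hi
      exact le_trans (Finset.inf'_le f (Finset.mem_Icc.mpr hi)) (hsinf i hi.1 hi.2)
    calc (t:ℝ) * I = (Finset.Icc 1 t).card • I := by rw [nsmul_eq_mul, hcard]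
      _ ≤ ∑ i ∈ Finset.Icc 1 t, ‖d i‖ ^ 2 := Finset.card_nsmul_le_sum _ _ _ h1
  have hfinal : (t:ℝ) * I ≤ (2 / α) * (Le (θ 1) - m) + 2 * ∑ i ∈ Finset.Icc 1 t, lam i * ε i := by
    have h2α : (2:ℝ) / α > 0 := by positivity
    have := mul_le_mul_of_nonneg_left hsum (le_of_lt h2α)
    have hαne : α ≠ 0 := ne_of_gt hα0
    calc (t:ℝ) * I ≤ ∑ i ∈ Finset.Icc 1 t, ‖d i‖ ^ 2 := hmin
      _ = (2 / α) * (α / 2 * ∑ i ∈ Finset.Icc 1 t, ‖d i‖ ^ 2) := by field_simp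
      _ ≤ (2 / α) * (Le (θ 1) - m + α * ∑ i ∈ Finset.Icc 1 t, lam i * ε i) := this
      _ = (2 / α) * (Le (θ 1) - m) + 2 * ∑ i ∈ Finset.Icc 1 t, lam i * ε i := by
          field_simp
  have : I ≤ (1 / (t:ℝ)) *
      ((2 / α) * (Le (θ 1) - m) + 2 * ∑ i ∈ Finset.Icc 1 t, lam i * ε i) := by
    rw [one_div, ← div_eq_inv_mul, le_div_iff₀ htpos, mul_comm]
    exact hfinal
  exact this
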